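/- Let I=(0,1) and δ ∈ (0,1) ∪ (1,∞). For any function u : I → ℝ with u, weighted derivative u' ∈ L²_{ρ^{2-δ}}(I), u(1)=0 and lim_{ρ→0⁺} ρ^{1-δ} u(ρ)² = 0, and for any ε₀ with 0 < ε₀ < |1-δ|, one has ∫₀¹ ρ^{-δ} u(ρ)² dρ ≤ (1/(ε₀(|1-δ|-ε₀))) ∫₀¹ ρ^{2-δ} u'(ρ)² dρ. -/

import Mathlib

open Real MeasureTheory Set Filter

open Topology

lemma young_pt (δ ε₀ x U V : ℝ) (hε₀ : 0 < ε₀) (hx : 0 < x) :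
    |2 * (x ^ (1 - δ) * (U * V))| ≤
      ε₀ * (x ^ (-δ) * U ^ 2) + ε₀⁻¹ * (x ^ (2 - δ) * V ^ 2) := by
  have e1 : x ^ (1 - δ) = x * x ^ (-δ) := by
    rw [show (1 : ℝ) - δ = 1 + (-δ) by ring, Real.rpow_add hx, Real.rpow_one]
  have e2 : x ^ (2 - δ) = x ^ (2 : ℕ) * x ^ (-δ) := by
    rw [show (2 : ℝ) - δ = (2 : ℕ) + (-δ) by push_cast; ring, Real.rpow_add hx,
      Real.rpow_natCast]
  have hp : (0 : ℝ) ≤ x ^ (-δ) := Real.rpow_nonneg hx.le _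
  rw [e1, e2]
  have key : 2 * (x * |U * V|) ≤ ε₀ * U ^ 2 + ε₀⁻¹ * (x ^ (2:ℕ) * V ^ 2) := by
    have h1 : |U * V| = |U| * |V| := abs_mul _ _
    have h2 : ε₀ * ε₀⁻¹ = 1 := mul_inv_cancel₀ hε₀.ne'
    have h4 : ε₀ * (ε₀⁻¹ * (x ^ (2:ℕ) * V ^ 2)) = x ^ (2:ℕ) * V ^ 2 := by
      rw [← mul_assoc, h2, one_mul]
    have h3 : ε₀ * (2 * (x * |U * V|)) ≤ ε₀ * (ε₀ * U ^ 2 + ε₀⁻¹ * (x ^ (2:ℕ) * V ^ 2)) := by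
      rw [mul_add, h4, h1]
      have h5 : 0 ≤ ε₀ ^ 2 * U ^ 2 - 2 * ε₀ * x * (|U| * |V|) + x ^ 2 * V ^ 2 := by
        calc (0:ℝ) ≤ (ε₀ * |U| - x * |V|) ^ 2 := sq_nonneg _
          _ = ε₀ ^ 2 * |U| ^ 2 - 2 * ε₀ * x * (|U| * |V|) + x ^ 2 * |V| ^ 2 := by ring
          _ = ε₀ ^ 2 * U ^ 2 - 2 * ε₀ * x * (|U| * |V|) + x ^ 2 * V ^ 2 := by
            rw [sq_abs, sq_abs]
      nlinarith [h5]
    exact le_of_mul_le_mul_left h3 hε₀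
  calc |2 * (x * x ^ (-δ) * (U * V))| = x ^ (-δ) * (2 * (x * |U * V|)) := by
        rw [abs_mul, abs_mul, abs_mul, abs_of_nonneg hp, abs_of_nonneg hx.le]
        norm_num; ring
    _ ≤ x ^ (-δ) * (ε₀ * U ^ 2 + ε₀⁻¹ * (x ^ (2:ℕ) * V ^ 2)) := by
        exact mul_le_mul_of_nonneg_left key hp
    _ = ε₀ * (x ^ (-δ) * U ^ 2) + ε₀⁻¹ * (x ^ (2:ℕ) * x ^ (-δ) * V ^ 2) := by ring

lemma hardy_key (δ : ℝ) (u u' : ℝ → ℝ)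
    (hderiv : ∀ ρ ∈ Ioo (0:ℝ) 1, HasDerivAt u (u' ρ) ρ)
    (hcont : ContinuousOn u' (Ioo (0:ℝ) 1))
    (a b : ℝ) (ha : 0 < a) (hab : a ≤ b) (hb : b < 1)
    (ε₀ : ℝ) (hε₀ : 0 < ε₀) :
    |1 - δ| * ∫ ρ in a..b, ρ ^ (-δ) * (u ρ) ^ 2 ≤
      |b ^ (1 - δ) * (u b) ^ 2| + |a ^ (1 - δ) * (u a) ^ 2|
      + ε₀ * (∫ ρ in a..b, ρ ^ (-δ) * (u ρ) ^ 2)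
      + ε₀⁻¹ * (∫ ρ in a..b, ρ ^ (2 - δ) * (u' ρ) ^ 2) := by
  have hsub : Set.uIcc a b ⊆ Ioo (0:ℝ) 1 := by
    rw [Set.uIcc_of_le hab]
    exact fun x hx => ⟨ha.trans_le hx.1, lt_of_le_of_lt hx.2 hb⟩
  have hu_c : ContinuousOn u (Ioo (0:ℝ) 1) :=
    fun x hx => (hderiv x hx).continuousAt.continuousWithinAt
  have c_rpow : ∀ e : ℝ, ContinuousOn (fun ρ : ℝ => ρ ^ e) (Set.uIcc a b) :=
    fun e x hx =>
      (Real.continuousAt_rpow_const x e (Or.inl (ne_of_gt (hsub hx).1))).continuousWithinAt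
  have c1 : ContinuousOn (fun ρ : ℝ => ρ ^ (-δ) * (u ρ) ^ 2) (Set.uIcc a b) :=
    (c_rpow (-δ)).mul ((hu_c.mono hsub).pow 2)
  have c2 : ContinuousOn (fun ρ : ℝ => ρ ^ (1 - δ) * (u ρ * u' ρ)) (Set.uIcc a b) :=
    (c_rpow (1 - δ)).mul ((hu_c.mono hsub).mul (hcont.mono hsub))
  have c3 : ContinuousOn (fun ρ : ℝ => ρ ^ (2 - δ) * (u' ρ) ^ 2) (Set.uIcc a b) :=
    (c_rpow (2 - δ)).mul ((hcont.mono hsub).pow 2)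
  have i1 := c1.intervalIntegrable (μ := volume)
  have i2 := c2.intervalIntegrable (μ := volume)
  have i3 := c3.intervalIntegrable (μ := volume)
  set I1 := ∫ ρ in a..b, ρ ^ (-δ) * (u ρ) ^ 2 with hI1
  set I2 := ∫ ρ in a..b, ρ ^ (1 - δ) * (u ρ * u' ρ) with hI2
  set I3 := ∫ ρ in a..b, ρ ^ (2 - δ) * (u' ρ) ^ 2 with hI3
  have ftc : ∫ x in a..b,
      ((1 - δ) * (x ^ (-δ) * (u x) ^ 2) + 2 * (x ^ (1 - δ) * (u x * u' x)))
      = b ^ (1 - δ) * (u b) ^ 2 - a ^ (1 - δ) * (u a) ^ 2 := by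
    apply intervalIntegral.integral_eq_sub_of_hasDerivAt
    · intro x hx
      have hx' : x ∈ Ioo (0:ℝ) 1 := hsub hx
      have h1 : HasDerivAt (fun ρ : ℝ => ρ ^ (1 - δ)) ((1 - δ) * x ^ (1 - δ - 1)) x :=
        Real.hasDerivAt_rpow_const (Or.inl (ne_of_gt hx'.1))
      have h2 : HasDerivAt (fun ρ => (u ρ) ^ 2) (2 * u x * u' x) x := by
        simpa using (hderiv x hx').fun_pow 2
      refine (h1.mul h2).congr_deriv ?_
      rw [show (1:ℝ) - δ - 1 = -δ by ring]
      ring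
    · exact (i1.const_mul _).add (i2.const_mul _)
  have split : ∫ x in a..b,
      ((1 - δ) * (x ^ (-δ) * (u x) ^ 2) + 2 * (x ^ (1 - δ) * (u x * u' x)))
      = (1 - δ) * I1 + 2 * I2 := by
    rw [intervalIntegral.integral_add (i1.const_mul _) (i2.const_mul _),
      intervalIntegral.integral_const_mul, intervalIntegral.integral_const_mul]
  have I1nn : 0 ≤ I1 := by
    apply intervalIntegral.integral_nonneg hab
    intro x hx
    have hx0 : 0 ≤ x := le_trans ha.le hx.1
    positivity
  have habs2 : 2 * |I2| ≤ ε₀ * I1 + ε₀⁻¹ * I3 := by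
    have e : 2 * |I2| = |∫ x in a..b, 2 * (x ^ (1 - δ) * (u x * u' x))| := by
      rw [intervalIntegral.integral_const_mul, abs_mul]
      norm_num
      rfl
    rw [e]
    calc |∫ x in a..b, 2 * (x ^ (1 - δ) * (u x * u' x))|
        ≤ ∫ x in a..b, |2 * (x ^ (1 - δ) * (u x * u' x))| :=
          intervalIntegral.abs_integral_le_integral_abs hab
      _ ≤ ∫ x in a..b, (ε₀ * (x ^ (-δ) * (u x) ^ 2) + ε₀⁻¹ * (x ^ (2 - δ) * (u' x) ^ 2)) := by
          apply intervalIntegral.integral_mono_on hab ((i2.const_mul 2).abs)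
            ((i1.const_mul _).add (i3.const_mul _))
          intro x hx
          exact young_pt δ ε₀ x (u x) (u' x) hε₀ (ha.trans_le hx.1)
      _ = ε₀ * I1 + ε₀⁻¹ * I3 := by
          rw [intervalIntegral.integral_add (i1.const_mul _) (i3.const_mul _),
            intervalIntegral.integral_const_mul, intervalIntegral.integral_const_mul]
  have eqn : (1 - δ) * I1 =
      b ^ (1 - δ) * (u b) ^ 2 - a ^ (1 - δ) * (u a) ^ 2 - 2 * I2 := by
    rw [split] at ftc; linarith
  have tri : |(1 - δ) * I1| ≤
      |b ^ (1 - δ) * (u b) ^ 2| + |a ^ (1 - δ) * (u a) ^ 2| + 2 * |I2| := by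
    rw [eqn]
    calc |b ^ (1 - δ) * (u b) ^ 2 - a ^ (1 - δ) * (u a) ^ 2 - 2 * I2|
        = |b ^ (1 - δ) * (u b) ^ 2 + (-(a ^ (1 - δ) * (u a) ^ 2)) + (-(2 * I2))| := by
          ring_nf
      _ ≤ |b ^ (1 - δ) * (u b) ^ 2| + |(-(a ^ (1 - δ) * (u a) ^ 2))| + |(-(2 * I2))| :=
          abs_add_three _ _ _
      _ = |b ^ (1 - δ) * (u b) ^ 2| + |a ^ (1 - δ) * (u a) ^ 2| + 2 * |I2| := by
          rw [abs_neg, abs_neg, abs_mul 2 I2, abs_two]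
  have habsmul : |1 - δ| * I1 = |(1 - δ) * I1| := by
    rw [abs_mul, abs_of_nonneg I1nn]
  have final : |1 - δ| * I1 ≤ |b ^ (1 - δ) * (u b) ^ 2| + |a ^ (1 - δ) * (u a) ^ 2|
      + ε₀ * I1 + ε₀⁻¹ * I3 := by rw [habsmul]; linarith
  exact final

/-- Weighted Hardy inequality on (0,1): for `δ ∈ (0,1) ∪ (1,∞)`, a C¹ function `u`
on `(0,1)` with `u 1 = 0`, `ρ^(1-δ) u(ρ)² → 0` as `ρ → 0⁺`, and weighted square
integrability of `u` and `u'`, and any `0 < ε₀ < |1-δ|`,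
`∫₀¹ ρ^(-δ) u² ≤ (ε₀(|1-δ|-ε₀))⁻¹ ∫₀¹ ρ^(2-δ) u'²`. -/
theorem stmt0 (δ : ℝ) (hδ : δ ∈ Ioo (0:ℝ) 1 ∪ Ioi (1:ℝ))
    (u u' : ℝ → ℝ)
    (hderiv : ∀ ρ ∈ Ioo (0:ℝ) 1, HasDerivAt u (u' ρ) ρ)
    (hcont : ContinuousOn u' (Ioo (0:ℝ) 1))
    (hu1 : Tendsto u (nhdsWithin 1 (Iio (1:ℝ))) (nhds 0))
    (hu0 : Tendsto (fun ρ : ℝ => ρ ^ (1 - δ) * (u ρ) ^ 2)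
      (nhdsWithin 0 (Ioi (0:ℝ))) (nhds 0))
    (hint : IntegrableOn (fun ρ : ℝ => ρ ^ (2 - δ) * (u ρ) ^ 2) (Ioo 0 1))
    (hint' : IntegrableOn (fun ρ : ℝ => ρ ^ (2 - δ) * (u' ρ) ^ 2) (Ioo 0 1))
    (ε₀ : ℝ) (hε₀ : 0 < ε₀) (hε₀' : ε₀ < |1 - δ|) :
    ∫ ρ in Ioo (0:ℝ) 1, ρ ^ (-δ) * (u ρ) ^ 2 ≤
      (1 / (ε₀ * (|1 - δ| - ε₀))) * ∫ ρ in Ioo (0:ℝ) 1, ρ ^ (2 - δ) * (u' ρ) ^ 2 := by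
  set K := |1 - δ| with hKdef
  have hKε : 0 < K - ε₀ := sub_pos.2 hε₀'
  -- sequences
  set a : ℕ → ℝ := fun n => 1 / ((n : ℝ) + 3) with ha_def
  have ha_pos : ∀ n, 0 < a n := fun n => by positivity
  have ha_le : ∀ n, a n ≤ 1 / 3 := by
    intro n
    apply one_div_le_one_div_of_le (by norm_num)
    have : (0:ℝ) ≤ (n:ℝ) := Nat.cast_nonneg n
    linarith
  have ha_lt : ∀ n, a n < 1 - a n := by
    intro n; have h1 := ha_le n; linarith
  have hb_lt1 : ∀ n, 1 - a n < 1 := fun n => by linarith [ha_pos n]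
  have ha_tendsto : Tendsto a atTop (𝓝 0) := by
    have h1 : Tendsto (fun n : ℕ => (n : ℝ) + 3) atTop atTop :=
      tendsto_atTop_add_const_right _ 3 tendsto_natCast_atTop_atTop
    simpa [ha_def, one_div, Pi.inv_def] using h1.inv_tendsto_atTop
  have haT : Tendsto a atTop (𝓝[>] (0:ℝ)) :=
    tendsto_nhdsWithin_iff.mpr ⟨ha_tendsto, Eventually.of_forall fun n => ha_pos n⟩
  have hbnhds : Tendsto (fun n => 1 - a n) atTop (𝓝 1) := by
    have := tendsto_const_nhds (x := (1:ℝ)) (f := atTop (α := ℕ))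
    simpa using this.sub ha_tendsto
  have hbT : Tendsto (fun n => 1 - a n) atTop (𝓝[<] (1:ℝ)) :=
    tendsto_nhdsWithin_iff.mpr ⟨hbnhds, Eventually.of_forall fun n => hb_lt1 n⟩
  -- boundary terms
  have FAd : Tendsto (fun n => |(a n) ^ (1 - δ) * (u (a n)) ^ 2|) atTop (𝓝 0) := by
    have := (hu0.comp haT).abs
    simpa using this
  have FBd : Tendsto (fun n => |(1 - a n) ^ (1 - δ) * (u (1 - a n)) ^ 2|) atTop (𝓝 0) := by
    have h1 : Tendsto (fun n => (1 - a n) ^ (1 - δ)) atTop (𝓝 ((1:ℝ) ^ (1 - δ))) :=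
      hbnhds.rpow_const (Or.inl one_ne_zero)
    have h2 : Tendsto (fun n => (u (1 - a n)) ^ 2) atTop (𝓝 (0 ^ 2)) :=
      (hu1.comp hbT).pow 2
    have h3 := (h1.mul h2).abs
    simpa using h3
  set B := ∫ ρ in Ioo (0:ℝ) 1, ρ ^ (2 - δ) * (u' ρ) ^ 2 with hBdef
  have Bnn : 0 ≤ B := by
    apply setIntegral_nonneg measurableSet_Ioo
    intro x hx
    have : (0:ℝ) ≤ x := hx.1.le
    positivity
  -- per-n estimate
  set A : ℕ → ℝ := fun n => ∫ ρ in Ioo (a n) (1 - a n), ρ ^ (-δ) * (u ρ) ^ 2 with hAdef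
  set c : ℕ → ℝ :=
    fun n => (|(1 - a n) ^ (1 - δ) * (u (1 - a n)) ^ 2| + |(a n) ^ (1 - δ) * (u (a n)) ^ 2|
      + ε₀⁻¹ * B) / (K - ε₀) with hcdef
  have hAc : ∀ n, A n ≤ c n := by
    intro n
    have key := hardy_key δ u u' hderiv hcont (a n) (1 - a n) (ha_pos n) (ha_lt n).le
      (hb_lt1 n) ε₀ hε₀
    have conv1 : (∫ ρ in (a n)..(1 - a n), ρ ^ (-δ) * (u ρ) ^ 2) = A n := by
      rw [intervalIntegral.integral_of_le (ha_lt n).le, integral_Ioc_eq_integral_Ioo]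
    have conv2 : (∫ ρ in (a n)..(1 - a n), ρ ^ (2 - δ) * (u' ρ) ^ 2)
        = ∫ ρ in Ioo (a n) (1 - a n), ρ ^ (2 - δ) * (u' ρ) ^ 2 := by
      rw [intervalIntegral.integral_of_le (ha_lt n).le, integral_Ioc_eq_integral_Ioo]
    rw [conv1, conv2] at key
    have hBle : (∫ ρ in Ioo (a n) (1 - a n), ρ ^ (2 - δ) * (u' ρ) ^ 2) ≤ B := by
      apply setIntegral_mono_set hint'
      · filter_upwards [ae_restrict_mem measurableSet_Ioo] with x hx
        have : (0:ℝ) ≤ x := hx.1.le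
        positivity
      · apply HasSubset.Subset.eventuallyLE
        intro x hx
        exact ⟨(ha_pos n).trans hx.1, hx.2.trans (hb_lt1 n)⟩
    have h2 : ε₀⁻¹ * (∫ ρ in Ioo (a n) (1 - a n), ρ ^ (2 - δ) * (u' ρ) ^ 2) ≤ ε₀⁻¹ * B :=
      mul_le_mul_of_nonneg_left hBle (inv_nonneg.2 hε₀.le)
    rw [hcdef, le_div_iff₀ hKε]
    have hKI : K * A n ≤ |(1 - a n) ^ (1 - δ) * (u (1 - a n)) ^ 2|
        + |(a n) ^ (1 - δ) * (u (a n)) ^ 2| + ε₀ * A n + ε₀⁻¹ * B := by linarith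
    linarith
  have hcT : Tendsto c atTop (𝓝 ((1 / (ε₀ * (K - ε₀))) * B)) := by
    have h1 : Tendsto (fun n => |(1 - a n) ^ (1 - δ) * (u (1 - a n)) ^ 2|
        + |(a n) ^ (1 - δ) * (u (a n)) ^ 2| + ε₀⁻¹ * B) atTop (𝓝 (0 + 0 + ε₀⁻¹ * B)) :=
      (FBd.add FAd).add tendsto_const_nhds
    have h2 := h1.div_const (K - ε₀)
    convert h2 using 2
    field_simp
    ring
  by_cases hInt : IntegrableOn (fun ρ : ℝ => ρ ^ (-δ) * (u ρ) ^ 2) (Ioo 0 1)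
  · -- integrable case
    have hmono : Monotone fun n => Ioo (a n) (1 - a n) := by
      intro m n hmn
      have hle : a n ≤ a m := by
        apply one_div_le_one_div_of_le (by positivity)
        have : (m:ℝ) ≤ (n:ℝ) := Nat.cast_le.2 hmn
        linarith
      exact Ioo_subset_Ioo hle (by linarith)
    have hunion : (⋃ n, Ioo (a n) (1 - a n)) = Ioo (0:ℝ) 1 := by
      ext x
      simp only [mem_iUnion, mem_Ioo]
      constructor
      · rintro ⟨n, h1, h2⟩
        exact ⟨(ha_pos n).trans h1, h2.trans (hb_lt1 n)⟩
      · rintro ⟨hx0, hx1⟩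
        have hm : 0 < min x (1 - x) := lt_min hx0 (by linarith)
        obtain ⟨n, hn⟩ := (ha_tendsto.eventually (gt_mem_nhds hm)).exists
        exact ⟨n, (hn.trans_le (min_le_left _ _)),
          by have := hn.trans_le (min_le_right _ _); linarith⟩
    have hlim : Tendsto A atTop (𝓝 (∫ ρ in Ioo (0:ℝ) 1, ρ ^ (-δ) * (u ρ) ^ 2)) := by
      have := tendsto_setIntegral_of_monotone (μ := volume)
        (s := fun n => Ioo (a n) (1 - a n)) (fun _ => measurableSet_Ioo) hmono
        (f := fun ρ : ℝ => ρ ^ (-δ) * (u ρ) ^ 2) (by rw [hunion]; exact hInt)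
      rwa [hunion] at this
    exact le_of_tendsto_of_tendsto' hlim hcT hAc
  · rw [integral_undef hInt]
    exact mul_nonneg (div_nonneg zero_le_one (mul_pos hε₀ hKε).le) Bnn
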